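/- Let R be a ring with right local units (for every finite subset F ⊆ R there exists e ∈ R with f·e = f for all f ∈ F), and M a right R-module. Then M has right local units (every m ∈ M admits e ∈ R with m·e = m) if and only if M is firm, i.e., the multiplication map M ⊗_R R → M is an isomorphism. -/

import Mathlib

/-- The subgroup of relations defining the tensor product `M ⊗_R R` of a right
`R`-module `M` with `R` (over a possibly non-unital ring `R`). -/
def tensorRel3 (R M : Type) [NonUnitalRing R] [AddCommGroup M] (act : M → R → M) :
    AddSubgroup (FreeAbelianGroup (M × R)) :=
  AddSubgroup.closure
    ({x | ∃ m m' r, x = FreeAbelianGroup.of (m + m', r) - FreeAbelianGroup.of (m, r)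
        - FreeAbelianGroup.of (m', r)} ∪
     {x | ∃ m r r', x = FreeAbelianGroup.of (m, r + r') - FreeAbelianGroup.of (m, r)
        - FreeAbelianGroup.of (m, r')} ∪
     {x | ∃ m r r', x = FreeAbelianGroup.of (act m r, r') - FreeAbelianGroup.of (m, r * r')})

/-- Let `R` be a ring with right local units and `M` a right `R`-module.  Then `R`
has right local units on `M` if and only if `M` is firm, i.e. the canonical map
`M ⊗_R R → M`, `m ⊗ r ↦ m·r`, is bijective. -/
theorem stmt3 (R M : Type) [NonUnitalRing R] [AddCommGroup M]
    (act : M → R → M)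
    (act_addl : ∀ m m' r, act (m + m') r = act m r + act m' r)
    (act_addr : ∀ m r r', act m (r + r') = act m r + act m r')
    (act_mul : ∀ m r r', act m (r * r') = act (act m r) r')
    (hR : ∀ F : Finset R, ∃ e : R, ∀ f ∈ F, f * e = f) :
    (∀ m : M, ∃ e : R, act m e = m) ↔
      ∃ φ : (FreeAbelianGroup (M × R) ⧸ tensorRel3 R M act) →+ M,
        (∀ m r, φ (QuotientAddGroup.mk (FreeAbelianGroup.of (m, r))) = act m r) ∧
        Function.Bijective φ := by
  classical
  set rel := tensorRel3 R M act with hrel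
  -- basic facts about act
  have act0 : ∀ r : R, act 0 r = 0 := by
    intro r
    have h : act 0 r = act 0 r + act 0 r := by simpa using act_addl 0 0 r
    exact (left_eq_add.mp h)
  -- membership lemmas
  have mem1 : ∀ (m m' : M) (r : R),
      FreeAbelianGroup.of (m + m', r) - FreeAbelianGroup.of (m, r)
        - FreeAbelianGroup.of (m', r) ∈ rel := fun m m' r =>
    AddSubgroup.subset_closure (Or.inl (Or.inl ⟨m, m', r, rfl⟩))
  have mem3 : ∀ (m : M) (r r' : R),
      FreeAbelianGroup.of (act m r, r') - FreeAbelianGroup.of (m, r * r') ∈ rel :=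
    fun m r r' => AddSubgroup.subset_closure (Or.inr ⟨m, r, r', rfl⟩)
  have mem0 : ∀ r : R, FreeAbelianGroup.of ((0 : M), r) ∈ rel := by
    intro r
    have h := mem1 0 0 r
    rw [add_zero] at h
    simpa using (neg_mem h : _ ∈ rel)
  -- quotient equality from relation membership
  have qeq : ∀ x y : FreeAbelianGroup (M × R), x - y ∈ rel →
      (QuotientAddGroup.mk x : FreeAbelianGroup (M × R) ⧸ rel) = QuotientAddGroup.mk y := by
    intro x y h
    rw [QuotientAddGroup.eq]
    simpa [neg_sub, sub_eq_add_neg, add_comm] using (neg_mem h : _ ∈ rel)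
  -- the multiplication map on the free group
  set ψ : FreeAbelianGroup (M × R) →+ M :=
    FreeAbelianGroup.lift (fun p : M × R => act p.1 p.2) with hψ
  have ψof : ∀ p : M × R, ψ (FreeAbelianGroup.of p) = act p.1 p.2 := fun p =>
    FreeAbelianGroup.lift_apply_of _ _
  have hker : rel ≤ ψ.ker := by
    rw [hrel, tensorRel3, AddSubgroup.closure_le]
    rintro x ((⟨m, m', r, rfl⟩ | ⟨m, r, r', rfl⟩) | ⟨m, r, r', rfl⟩) <;>
      simp [AddMonoidHom.mem_ker, ψof, act_addl, act_addr, act_mul]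
  -- key structural lemma: each element of the free group is equivalent, mod rel,
  -- to of (ψ x, e) for a suitable local unit e
  have key : ∀ x : FreeAbelianGroup (M × R), ∃ F : Finset R, ∀ e : R,
      (∀ r ∈ F, r * e = r) →
      (QuotientAddGroup.mk x : FreeAbelianGroup (M × R) ⧸ rel) =
        QuotientAddGroup.mk (FreeAbelianGroup.of (ψ x, e)) := by
    intro x
    induction x using FreeAbelianGroup.induction_on with
    | zero =>
      refine ⟨∅, fun e _ => ?_⟩
      rw [map_zero]
      exact ((QuotientAddGroup.eq_zero_iff _).mpr (mem0 e)).symm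
    | of p =>
      obtain ⟨m, r⟩ := p
      refine ⟨{r}, fun e he => ?_⟩
      have hre : r * e = r := he r (Finset.mem_singleton_self r)
      have h := mem3 m r e
      rw [hre] at h
      rw [ψof]
      exact (qeq _ _ h).symm
    | neg p ih =>
      obtain ⟨F, hF⟩ := ih
      refine ⟨F, fun e he => ?_⟩
      have h1 := hF e he
      have h2 : (QuotientAddGroup.mk (FreeAbelianGroup.of (-ψ (FreeAbelianGroup.of p), e)) :
          FreeAbelianGroup (M × R) ⧸ rel) =
          -QuotientAddGroup.mk (FreeAbelianGroup.of (ψ (FreeAbelianGroup.of p), e)) := by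
        rw [eq_neg_iff_add_eq_zero, ← QuotientAddGroup.mk_add, QuotientAddGroup.eq_zero_iff]
        have h := mem1 (-ψ (FreeAbelianGroup.of p)) (ψ (FreeAbelianGroup.of p)) e
        rw [neg_add_cancel] at h
        have := add_mem (neg_mem h) (mem0 e)
        simpa [sub_eq_add_neg, add_comm, add_left_comm, add_assoc] using this
      rw [map_neg, h2, ← h1, QuotientAddGroup.mk_neg]
    | add x y ihx ihy =>
      obtain ⟨Fx, hFx⟩ := ihx
      obtain ⟨Fy, hFy⟩ := ihy
      refine ⟨Fx ∪ Fy, fun e he => ?_⟩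
      have h1 := hFx e (fun r hr => he r (Finset.mem_union_left _ hr))
      have h2 := hFy e (fun r hr => he r (Finset.mem_union_right _ hr))
      have h3 : (QuotientAddGroup.mk (FreeAbelianGroup.of (ψ x + ψ y, e)) :
          FreeAbelianGroup (M × R) ⧸ rel) =
          QuotientAddGroup.mk (FreeAbelianGroup.of (ψ x, e))
            + QuotientAddGroup.mk (FreeAbelianGroup.of (ψ y, e)) := by
        rw [← QuotientAddGroup.mk_add]
        exact qeq _ _ (by simpa [sub_sub] using mem1 (ψ x) (ψ y) e)
      rw [map_add, h3, ← h1, ← h2, QuotientAddGroup.mk_add]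
  constructor
  · -- local units on M → firm
    intro hM
    refine ⟨QuotientAddGroup.lift rel ψ hker, fun m r => ?_, ?_, ?_⟩
    · rw [QuotientAddGroup.lift_mk']; exact ψof (m, r)
    · -- injective
      intro a b hab
      obtain ⟨x, rfl⟩ := QuotientAddGroup.mk_surjective a
      obtain ⟨y, rfl⟩ := QuotientAddGroup.mk_surjective b
      rw [QuotientAddGroup.lift_mk', QuotientAddGroup.lift_mk'] at hab
      obtain ⟨Fx, hFx⟩ := key x
      obtain ⟨Fy, hFy⟩ := key y
      obtain ⟨e, he⟩ := hR (Fx ∪ Fy)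
      rw [hFx e (fun r hr => he r (Finset.mem_union_left _ hr)),
        hFy e (fun r hr => he r (Finset.mem_union_right _ hr)), hab]
    · -- surjective
      intro m
      obtain ⟨e, he⟩ := hM m
      exact ⟨QuotientAddGroup.mk (FreeAbelianGroup.of (m, e)), by
        rw [QuotientAddGroup.lift_mk', ψof]; exact he⟩
  · -- firm → local units on M
    rintro ⟨φ, hφ, hinj, hsurj⟩ m
    obtain ⟨q, hq⟩ := hsurj m
    obtain ⟨x, rfl⟩ := QuotientAddGroup.mk_surjective q
    have hφψ : ∀ x : FreeAbelianGroup (M × R),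
        φ (QuotientAddGroup.mk x) = ψ x := by
      intro x
      induction x using FreeAbelianGroup.induction_on with
      | zero => simp
      | of p => rw [ψof]; exact hφ p.1 p.2
      | neg p ih => rw [map_neg, QuotientAddGroup.mk_neg, map_neg, ih]
      | add a b iha ihb => rw [map_add, QuotientAddGroup.mk_add, map_add, iha, ihb]
    obtain ⟨F, hF⟩ := key x
    obtain ⟨e, he⟩ := hR F
    refine ⟨e, ?_⟩
    have h1 := hF e he
    have h2 := congrArg φ h1
    rw [hφψ, hφψ, ψof] at h2
    rw [hφψ] at hq
    rw [← hq]
    exact h2.symm
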